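/- Fix positive integers l_i and positive reals λ_i for n < i ≤ m, and let p = (p_{n+1},...,p_m) with 0 ≤ p_i ≤ 2l_i and Σ_i p_i ≡ 0 (mod 3). Then Σ_{(j,k): j_i + k_i = p_i, Σj_i ≡ 0, Σk_i ≡ 0 (mod 3)} ∏_i C(l_i, j_i)·C(l_i, k_i) + 2·Σ_{(j,k): j_i + k_i = p_i, Σj_i ≡ 1, Σk_i ≡ 2 (mod 3)} ∏_i C(l_i, j_i)·C(l_i, k_i) = ∏_i C(2l_i, p_i), where sums run over tuples with 0 ≤ j_i, k_i ≤ l_i. -/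

import Mathlib

open Finset

def Hf (l p : ℕ → ℕ) (i a b : ℕ) : ℕ :=
  if a + b = p i then (l i).choose a * (l i).choose b else 0


lemma vand_aux (l q : ℕ) :
    (∑ a ∈ Finset.range (l+1), ∑ b ∈ Finset.range (l+1),
      if a + b = q then l.choose a * l.choose b else 0) = (2*l).choose q := by
  rw [two_mul, Nat.add_choose_eq, ← Finset.sum_product', ← Finset.sum_filter]
  apply Finset.sum_subset
  · intro x hx
    simp only [Finset.mem_filter, Finset.mem_product, Finset.mem_range] at hx
    simpa using hx.2
  · intro x hx hx'
    rw [Finset.HasAntidiagonal.mem_antidiagonal] at hx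
    simp only [Finset.mem_filter, Finset.mem_product, Finset.mem_range, not_and] at hx'
    by_cases h1 : x.1 < l + 1
    · by_cases h2 : x.2 < l + 1
      · exact absurd hx (hx' ⟨h1, h2⟩)
      · exact mul_eq_zero_of_right _ (Nat.choose_eq_zero_of_lt (by omega))
    · exact mul_eq_zero_of_left (Nat.choose_eq_zero_of_lt (by omega)) _

open Classical in
lemma T_eq (s : Finset ℕ) (l p : ℕ → ℕ) :
    (∑ j ∈ s.pi (fun i => Finset.range (l i + 1)),
      ∑ k ∈ s.pi (fun i => Finset.range (l i + 1)),
        if (∀ i (hi : i ∈ s), j i hi + k i hi = p i) then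
          ∏ i ∈ s.attach, (l i.1).choose (j i.1 i.2) * (l i.1).choose (k i.1 i.2)
        else 0)
    = ∏ i ∈ s, (2 * l i).choose (p i) := by
  have h1 : ∀ (j k : ∀ i ∈ s, ℕ),
      (if (∀ i (hi : i ∈ s), j i hi + k i hi = p i) then
          ∏ i ∈ s.attach, (l i.1).choose (j i.1 i.2) * (l i.1).choose (k i.1 i.2)
        else 0)
      = ∏ i ∈ s.attach, Hf l p i.1 (j i.1 i.2) (k i.1 i.2) := by
    intro j k
    have hiff : (∀ i (hi : i ∈ s), j i hi + k i hi = p i) ↔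
        (∀ x ∈ s.attach, j x.1 x.2 + k x.1 x.2 = p x.1) :=
      ⟨fun h x _ => h x.1 x.2, fun h i hi => h ⟨i, hi⟩ (Finset.mem_attach _ _)⟩
    simp only [Hf, Finset.prod_ite_zero, hiff]
    congr 1
  have h2 : ∀ (j : ∀ i ∈ s, ℕ),
      (∑ k ∈ s.pi (fun i => Finset.range (l i + 1)),
        ∏ i ∈ s.attach, Hf l p i.1 (j i.1 i.2) (k i.1 i.2))
      = ∏ i ∈ s.attach, ∑ b ∈ Finset.range (l i.1 + 1), Hf l p i.1 (j i.1 i.2) b := by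
    intro j
    rw [show (∑ k ∈ s.pi (fun i => Finset.range (l i + 1)),
        ∏ i ∈ s.attach, Hf l p i.1 (j i.1 i.2) (k i.1 i.2))
        = ∑ k ∈ s.pi (fun i => Finset.range (l i + 1)),
          ∏ i ∈ s.attach, Hf l p i.1 (if h : i.1 ∈ s then j i.1 h else 0) (k i.1 i.2) from
      Finset.sum_congr rfl fun k _ => Finset.prod_congr rfl fun i _ => by rw [dif_pos i.2]]
    rw [← Finset.prod_sum s (fun i => Finset.range (l i + 1))
      (fun i b => Hf l p i (if h : i ∈ s then j i h else 0) b)]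
    rw [← Finset.prod_attach s
      (fun i => ∑ b ∈ Finset.range (l i + 1), Hf l p i (if h : i ∈ s then j i h else 0) b)]
    exact Finset.prod_congr rfl fun i _ => Finset.sum_congr rfl fun b _ => by rw [dif_pos i.2]
  calc (∑ j ∈ s.pi (fun i => Finset.range (l i + 1)),
      ∑ k ∈ s.pi (fun i => Finset.range (l i + 1)),
        if (∀ i (hi : i ∈ s), j i hi + k i hi = p i) then
          ∏ i ∈ s.attach, (l i.1).choose (j i.1 i.2) * (l i.1).choose (k i.1 i.2)
        else 0)
      = ∑ j ∈ s.pi (fun i => Finset.range (l i + 1)),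
          ∏ i ∈ s.attach, ∑ b ∈ Finset.range (l i.1 + 1), Hf l p i.1 (j i.1 i.2) b := by
        refine Finset.sum_congr rfl fun j _ => ?_
        rw [Finset.sum_congr rfl fun k _ => h1 j k, h2 j]
    _ = ∏ i ∈ s, ∑ a ∈ Finset.range (l i + 1), ∑ b ∈ Finset.range (l i + 1), Hf l p i a b :=
        (Finset.prod_sum s _ (fun i a => ∑ b ∈ Finset.range (l i + 1), Hf l p i a b)).symm
    _ = ∏ i ∈ s, (2 * l i).choose (p i) := by
        refine Finset.prod_congr rfl fun i _ => ?_
        simp only [Hf]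
        exact vand_aux (l i) (p i)


open Classical in
noncomputable def Sres (s : Finset ℕ) (l p : ℕ → ℕ) (a b : ℕ) : ℕ :=
  ∑ j ∈ s.pi (fun i => Finset.range (l i + 1)),
    ∑ k ∈ s.pi (fun i => Finset.range (l i + 1)),
      if (∀ i (hi : i ∈ s), j i hi + k i hi = p i) ∧
          (∑ i ∈ s.attach, j i.1 i.2) % 3 = a ∧
          (∑ i ∈ s.attach, k i.1 i.2) % 3 = b then
        ∏ i ∈ s.attach, (l i.1).choose (j i.1 i.2) * (l i.1).choose (k i.1 i.2)
      else 0

open Classical in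
theorem filtered_vandermonde_identity
    (s : Finset ℕ) (l p : ℕ → ℕ)
    (hl : ∀ i ∈ s, 1 ≤ l i)
    (hp : ∀ i ∈ s, p i ≤ 2 * l i)
    (hp3 : (∑ i ∈ s, p i) % 3 = 0) :
    (∑ j ∈ s.pi (fun i => Finset.range (l i + 1)),
      ∑ k ∈ s.pi (fun i => Finset.range (l i + 1)),
        if (∀ i (hi : i ∈ s), j i hi + k i hi = p i) ∧
            (∑ i ∈ s.attach, j i.1 i.2) % 3 = 0 ∧
            (∑ i ∈ s.attach, k i.1 i.2) % 3 = 0 then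
          ∏ i ∈ s.attach, (l i.1).choose (j i.1 i.2) * (l i.1).choose (k i.1 i.2)
        else 0)
    + 2 * (∑ j ∈ s.pi (fun i => Finset.range (l i + 1)),
      ∑ k ∈ s.pi (fun i => Finset.range (l i + 1)),
        if (∀ i (hi : i ∈ s), j i hi + k i hi = p i) ∧
            (∑ i ∈ s.attach, j i.1 i.2) % 3 = 1 ∧
            (∑ i ∈ s.attach, k i.1 i.2) % 3 = 2 then
          ∏ i ∈ s.attach, (l i.1).choose (j i.1 i.2) * (l i.1).choose (k i.1 i.2)
        else 0)
    = ∏ i ∈ s, (2 * l i).choose (p i) := by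
  have hsymm : Sres s l p 2 1 = Sres s l p 1 2 := by
    simp only [Sres]
    rw [Finset.sum_comm]
    refine Finset.sum_congr rfl fun x _ => Finset.sum_congr rfl fun y _ => ?_
    have hiff : ((∀ i (hi : i ∈ s), y i hi + x i hi = p i) ∧
          (∑ i ∈ s.attach, y i.1 i.2) % 3 = 2 ∧ (∑ i ∈ s.attach, x i.1 i.2) % 3 = 1) ↔
        ((∀ i (hi : i ∈ s), x i hi + y i hi = p i) ∧
          (∑ i ∈ s.attach, x i.1 i.2) % 3 = 1 ∧ (∑ i ∈ s.attach, y i.1 i.2) % 3 = 2) := by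
      constructor <;> rintro ⟨h1, h2, h3⟩ <;>
        exact ⟨fun i hi => by rw [add_comm]; exact h1 i hi, h3, h2⟩
    have hval : (∏ i ∈ s.attach, (l i.1).choose (y i.1 i.2) * (l i.1).choose (x i.1 i.2))
        = ∏ i ∈ s.attach, (l i.1).choose (x i.1 i.2) * (l i.1).choose (y i.1 i.2) :=
      Finset.prod_congr rfl fun _ _ => mul_comm _ _
    simp only [hiff, hval]
  have hsplit : (∑ j ∈ s.pi (fun i => Finset.range (l i + 1)),
      ∑ k ∈ s.pi (fun i => Finset.range (l i + 1)),
        if (∀ i (hi : i ∈ s), j i hi + k i hi = p i) then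
          ∏ i ∈ s.attach, (l i.1).choose (j i.1 i.2) * (l i.1).choose (k i.1 i.2)
        else 0)
      = Sres s l p 0 0 + Sres s l p 1 2 + Sres s l p 2 1 := by
    simp only [Sres]
    rw [← Finset.sum_add_distrib, ← Finset.sum_add_distrib]
    refine Finset.sum_congr rfl fun j _ => ?_
    rw [← Finset.sum_add_distrib, ← Finset.sum_add_distrib]
    refine Finset.sum_congr rfl fun k _ => ?_
    by_cases hC : ∀ i (hi : i ∈ s), j i hi + k i hi = p i
    · have hsum : (∑ i ∈ s.attach, j i.1 i.2) + (∑ i ∈ s.attach, k i.1 i.2) = ∑ i ∈ s, p i := by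
        rw [← Finset.sum_add_distrib,
          show (∑ i ∈ s.attach, (j i.1 i.2 + k i.1 i.2)) = ∑ i ∈ s.attach, p i.1 from
            Finset.sum_congr rfl fun i _ => hC i.1 i.2]
        exact Finset.sum_attach s p
      have h3 : ((∑ i ∈ s.attach, j i.1 i.2) % 3 = 0 ∧ (∑ i ∈ s.attach, k i.1 i.2) % 3 = 0)
          ∨ ((∑ i ∈ s.attach, j i.1 i.2) % 3 = 1 ∧ (∑ i ∈ s.attach, k i.1 i.2) % 3 = 2)
          ∨ ((∑ i ∈ s.attach, j i.1 i.2) % 3 = 2 ∧ (∑ i ∈ s.attach, k i.1 i.2) % 3 = 1) := by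
        omega
      rcases h3 with ⟨h1, h2⟩ | ⟨h1, h2⟩ | ⟨h1, h2⟩ <;> simp [hC, h1, h2]
    · simp [hC]
  have hmain : Sres s l p 0 0 + 2 * Sres s l p 1 2 = ∏ i ∈ s, (2 * l i).choose (p i) := by
    rw [hsymm] at hsplit
    rw [two_mul, ← add_assoc, ← hsplit]
    exact T_eq s l p
  exact hmain
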